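/- In a category internal to Vect (a 2-vector space), composition is determined by the other structure maps: for composable morphisms f : x → y and g : y → z, the composite is f∘g = f + g - i(y), where i is the identity-assigning map. Equivalently, writing each morphism as its source plus its 'arrow part' f̄ = f - i(s(f)), composition is given by (x, f̄)∘(y, ḡ) = (x, f̄ + ḡ). -/

import Mathlib

/-- A 2-vector space: a category internal to `Vect` over a field `k`.
Composition is given as a partially-defined operation on composable pairs,
required to be linear (additive and homogeneous on composable pairs). -/
structure TwoVect (k : Type) [Field k] (V0 V1 : Type)
    [AddCommGroup V0] [Module k V0] [AddCommGroup V1] [Module k V1] where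
  s : V1 →ₗ[k] V0
  t : V1 →ₗ[k] V0
  i : V0 →ₗ[k] V1
  s_i : ∀ x, s (i x) = x
  t_i : ∀ x, t (i x) = x
  comp : ∀ f g : V1, t f = s g → V1
  comp_add : ∀ f g f' g' (h : t f = s g) (h' : t f' = s g')
      (h'' : t (f + f') = s (g + g')),
      comp (f + f') (g + g') h'' = comp f g h + comp f' g' h'
  comp_smul : ∀ (c : k) (f g : V1) (h : t f = s g) (h' : t (c • f) = s (c • g)),
      comp (c • f) (c • g) h' = c • comp f g h
  s_comp : ∀ f g (h : t f = s g), s (comp f g h) = s f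
  t_comp : ∀ f g (h : t f = s g), t (comp f g h) = t g
  id_comp : ∀ f (h : t (i (s f)) = s f), comp (i (s f)) f h = f
  comp_id : ∀ f (h : t f = s (i (t f))), comp f (i (t f)) h = f
  assoc : ∀ f g e (hfg : t f = s g) (hge : t g = s e)
      (h1 : t (comp f g hfg) = s e) (h2 : t f = s (comp g e hge)),
      comp (comp f g hfg) e h1 = comp f (comp g e hge) h2

/-- In a category internal to `Vect`, composition is determined by the
remaining structure maps: `f ∘ g = f + g - i(y)` for `f : x → y`, `g : y → z`;
equivalently, the source of the composite is `x` and its arrow part is the sum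
of the arrow parts `f̄ + ḡ`. -/
theorem composition_determined (k : Type) [Field k] (V0 V1 : Type)
    [AddCommGroup V0] [Module k V0] [AddCommGroup V1] [Module k V1]
    (V : TwoVect k V0 V1) (f g : V1) (h : V.t f = V.s g) :
    V.comp f g h = f + g - V.i (V.t f) ∧
    V.s (V.comp f g h) = V.s f ∧
    V.comp f g h - V.i (V.s (V.comp f g h)) =
      (f - V.i (V.s f)) + (g - V.i (V.s g)) := by
  have comp_congr : ∀ (f₁ f₂ g₁ g₂ : V1) (hf : f₁ = f₂) (hg : g₁ = g₂)
      (h₁ : V.t f₁ = V.s g₁) (h₂ : V.t f₂ = V.s g₂),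
      V.comp f₁ g₁ h₁ = V.comp f₂ g₂ h₂ := by
    intro f₁ f₂ g₁ g₂ hf hg h₁ h₂; subst hf; subst hg; rfl
  set y := V.t f with hy
  set f' := f - V.i y with hf'
  set g' := g - V.i y with hg'
  have htf' : V.t f' = 0 := by simp [hf', V.t_i, ← hy]
  have hsg' : V.s g' = 0 := by simp [hg', V.s_i, ← h]
  have h1 : V.t f' = V.s g' := by rw [htf', hsg']
  have hii : V.t (V.i y) = V.s (V.i y) := by rw [V.t_i, V.s_i]
  have h0f : V.t f' = V.s (0 : V1) := by simp [htf']
  have h0g : V.t (0 : V1) = V.s g' := by simp [hsg']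
  -- comp f' 0 = f'
  have hc1 : V.comp f' 0 h0f = f' := by
    have := V.comp_id f' (by simp [htf'])
    have e0 : V.i (V.t f') = (0 : V1) := by rw [htf']; simp
    calc V.comp f' 0 h0f = V.comp f' (V.i (V.t f')) (by simp [htf']) :=
          comp_congr _ _ _ _ rfl e0.symm _ _
      _ = f' := V.comp_id f' _
  have hc2 : V.comp 0 g' h0g = g' := by
    have e0 : V.i (V.s g') = (0 : V1) := by rw [hsg']; simp
    calc V.comp 0 g' h0g = V.comp (V.i (V.s g')) g' (by simp [hsg']) :=
          comp_congr _ _ _ _ e0.symm rfl _ _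
      _ = g' := V.id_comp g' _
  have hfg' : V.comp f' g' h1 = f' + g' := by
    have hadd : V.t (f' + 0) = V.s (0 + g') := by simp [htf', hsg']
    calc V.comp f' g' h1 = V.comp (f' + 0) (0 + g') hadd :=
          comp_congr _ _ _ _ (by abel) (by abel) _ _
      _ = V.comp f' 0 h0f + V.comp 0 g' h0g := V.comp_add _ _ _ _ _ _ _
      _ = f' + g' := by rw [hc1, hc2]
  have hiy : V.comp (V.i y) (V.i y) hii = V.i y := by
    calc V.comp (V.i y) (V.i y) hii
        = V.comp (V.i (V.s (V.i y))) (V.i y) (by simp [V.s_i, V.t_i]) :=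
          comp_congr _ _ _ _ (by simp [V.s_i]) rfl _ _
      _ = V.i y := V.id_comp (V.i y) _
  have hmain : V.comp f g h = f + g - V.i y := by
    have hadd : V.t (f' + V.i y) = V.s (g' + V.i y) := by
      simp [htf', hsg', V.t_i, V.s_i]
    calc V.comp f g h = V.comp (f' + V.i y) (g' + V.i y) hadd :=
          comp_congr _ _ _ _ (by rw [hf']; abel) (by rw [hg']; abel) _ _
      _ = V.comp f' g' h1 + V.comp (V.i y) (V.i y) hii := V.comp_add _ _ _ _ _ _ _
      _ = f' + g' + V.i y := by rw [hfg', hiy]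
      _ = f + g - V.i y := by rw [hf', hg']; abel
  refine ⟨hmain, V.s_comp f g h, ?_⟩
  rw [hmain]
  have hs : V.s (f + g - V.i y) = V.s f := by simp [V.s_i, ← h]
  rw [hs, h]
  abel
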